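/- Let ρ be a qubit density matrix and n ∈ ℝ³ a unit vector. Then every pure-state decomposition ρ = ∑ₖ pₖ |ψₖ⟩⟨ψₖ| (pₖ ≥ 0, ∑ₖ pₖ = 1, ψₖ ∈ ℂ² unit vectors) satisfies ∑ₖ pₖ (ΔL_n)²_{ψₖ} ≥ (ΔL_n)²_ρ − (1 − Tr(ρ²))/2. (Since the quantum Fisher information is the convex roof of four times the variance, this expresses the qubit identity (ΔL_n)²_ρ − (1/4)F_Q[ρ, L_n] = (1 − Tr ρ²)/2 as a lower bound over all decompositions.) -/

import Mathlib

open Matrix BigOperators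
open scoped ComplexOrder

/-- The Pauli matrix σx. -/
def sigmaX : Matrix (Fin 2) (Fin 2) ℂ := !![0, 1; 1, 0]

/-- The Pauli matrix σy. -/
def sigmaY : Matrix (Fin 2) (Fin 2) ℂ := !![0, -Complex.I; Complex.I, 0]

/-- The Pauli matrix σz. -/
def sigmaZ : Matrix (Fin 2) (Fin 2) ℂ := !![1, 0; 0, -1]

/-- The spin-1/2 operator L_n = (n₁σx + n₂σy + n₃σz)/2 along the direction n ∈ ℝ³. -/
noncomputable def Lspin (n : Fin 3 → ℝ) : Matrix (Fin 2) (Fin 2) ℂ :=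
  (1 / 2 : ℂ) • ((n 0 : ℂ) • sigmaX + (n 1 : ℂ) • sigmaY + (n 2 : ℂ) • sigmaZ)

/-- A qubit density matrix: 2×2 positive semidefinite with unit trace. -/
def IsDensity (ρ : Matrix (Fin 2) (Fin 2) ℂ) : Prop :=
  ρ.PosSemidef ∧ ρ.trace = 1

/-- The rank-one projection |ψ⟩⟨ψ|. -/
def ketbra (ψ : Fin 2 → ℂ) : Matrix (Fin 2) (Fin 2) ℂ :=
  Matrix.vecMulVec ψ (star ψ)

/-- Pure-state variance (ΔA)²_ψ = ⟨ψ, A²ψ⟩ − ⟨ψ, Aψ⟩². -/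
noncomputable def pureVar (A : Matrix (Fin 2) (Fin 2) ℂ) (ψ : Fin 2 → ℂ) : ℝ :=
  (star ψ ⬝ᵥ (A * A).mulVec ψ).re - ((star ψ ⬝ᵥ A.mulVec ψ).re) ^ 2

/-- Mixed-state variance (ΔA)²_ρ = Tr(A²ρ) − (Tr(Aρ))². -/
noncomputable def mixVar (A ρ : Matrix (Fin 2) (Fin 2) ℂ) : ℝ :=
  ((A * A * ρ).trace).re - (((A * ρ).trace).re) ^ 2

/-- The purity Tr(ρ²). -/
noncomputable def purity (ρ : Matrix (Fin 2) (Fin 2) ℂ) : ℝ :=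
  ((ρ * ρ).trace).re

/- ### Auxiliary lemmas -/

lemma Lsq (n : Fin 3 → ℝ) (hn : n ⬝ᵥ n = 1) :
    Lspin n * Lspin n = (1/4 : ℂ) • 1 := by
  have h' : n 0 * n 0 + n 1 * n 1 + n 2 * n 2 = 1 := by
    simpa [dotProduct, Fin.sum_univ_three] using hn
  have h : ((n 0 : ℂ))^2 + ((n 1 : ℂ))^2 + ((n 2 : ℂ))^2 = 1 := by
    have := congrArg (Complex.ofReal) h'
    push_cast at this; linear_combination this
  have hI := Complex.I_sq
  ext i j
  fin_cases i <;> fin_cases j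
  · simp [Lspin, sigmaX, sigmaY, sigmaZ, Matrix.mul_apply, Fin.sum_univ_two, Matrix.one_apply]
    linear_combination (1/4 : ℂ) * h - (((n 1 : ℂ))^2/4) * hI
  · simp [Lspin, sigmaX, sigmaY, sigmaZ, Matrix.mul_apply, Fin.sum_univ_two, Matrix.one_apply]
    ring
  · simp [Lspin, sigmaX, sigmaY, sigmaZ, Matrix.mul_apply, Fin.sum_univ_two, Matrix.one_apply]
    ring
  · simp [Lspin, sigmaX, sigmaY, sigmaZ, Matrix.mul_apply, Fin.sum_univ_two, Matrix.one_apply]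
    linear_combination (1/4 : ℂ) * h - (((n 1 : ℂ))^2/4) * hI

lemma trace_mul_ketbra (A : Matrix (Fin 2) (Fin 2) ℂ) (ψ : Fin 2 → ℂ) :
    (A * ketbra ψ).trace = star ψ ⬝ᵥ A.mulVec ψ := by
  simp [ketbra, Matrix.trace, Matrix.mul_apply, Matrix.vecMulVec_apply, Matrix.diag,
    dotProduct, mulVec, Fin.sum_univ_two]
  ring

lemma norm_sq_eq (ψ : Fin 2 → ℂ) (hψ : star ψ ⬝ᵥ ψ = 1) :
    (ψ 0).re^2 + (ψ 0).im^2 + (ψ 1).re^2 + (ψ 1).im^2 = 1 := by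
  have := congrArg Complex.re hψ
  simp [dotProduct, Fin.sum_univ_two, Complex.add_re, Complex.mul_re] at this
  linear_combination this

lemma key_real (n0 n1 n2 x1 y1 z1 x2 y2 z2 : ℝ)
    (hn : n0^2+n1^2+n2^2 = 1) (h1 : x1^2+y1^2+z1^2 = 1) (h2 : x2^2+y2^2+z2^2 = 1) :
    ((n0*x1+n1*y1+n2*z1)/2 - (n0*x2+n1*y2+n2*z2)/2)^2
      ≤ 1 - (1 + (x1*x2+y1*y2+z1*z2))/2 := by
  nlinarith [sq_nonneg (n0*(y1-y2)-n1*(x1-x2)), sq_nonneg (n0*(z1-z2)-n2*(x1-x2)),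
    sq_nonneg (n1*(z1-z2)-n2*(y1-y2)), sq_nonneg (x1-x2), sq_nonneg (y1-y2), sq_nonneg (z1-z2)]

lemma texpr (n : Fin 3 → ℝ) (ψ : Fin 2 → ℂ) :
    (star ψ ⬝ᵥ (Lspin n).mulVec ψ).re =
      (n 0 * (2*((ψ 0).re*(ψ 1).re + (ψ 0).im*(ψ 1).im))
       + n 1 * (2*((ψ 0).re*(ψ 1).im - (ψ 0).im*(ψ 1).re))
       + n 2 * ((ψ 0).re^2+(ψ 0).im^2-(ψ 1).re^2-(ψ 1).im^2))/2 := by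
  simp [Lspin, sigmaX, sigmaY, sigmaZ, dotProduct, mulVec, Fin.sum_univ_two,
    Complex.add_re, Complex.mul_re, Complex.mul_im, Complex.add_im]
  ring

lemma qexpr (ψ φ : Fin 2 → ℂ) :
    ((ketbra ψ * ketbra φ).trace).re =
      ((ψ 0).re*(φ 0).re + (ψ 0).im*(φ 0).im + (ψ 1).re*(φ 1).re + (ψ 1).im*(φ 1).im)^2
      + ((ψ 0).re*(φ 0).im - (ψ 0).im*(φ 0).re + (ψ 1).re*(φ 1).im - (ψ 1).im*(φ 1).re)^2 := by
  simp [ketbra, Matrix.trace, Matrix.mul_apply, Matrix.vecMulVec_apply, Fin.sum_univ_two,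
    Matrix.diag, Complex.add_re, Complex.mul_re, Complex.mul_im, Complex.add_im]
  ring

/-- The pairwise inequality (t_ψ − t_φ)² ≤ 1 − Tr(P_ψ P_φ). -/
lemma pairwise (n : Fin 3 → ℝ) (hn : n ⬝ᵥ n = 1) (ψ φ : Fin 2 → ℂ)
    (hψ : star ψ ⬝ᵥ ψ = 1) (hφ : star φ ⬝ᵥ φ = 1) :
    ((star ψ ⬝ᵥ (Lspin n).mulVec ψ).re - (star φ ⬝ᵥ (Lspin n).mulVec φ).re)^2
      ≤ 1 - ((ketbra ψ * ketbra φ).trace).re := by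
  rw [texpr, texpr, qexpr]
  set a1 := (ψ 0).re; set b1 := (ψ 0).im; set c1 := (ψ 1).re; set d1 := (ψ 1).im
  set a2 := (φ 0).re; set b2 := (φ 0).im; set c2 := (φ 1).re; set d2 := (φ 1).im
  have hN1 : a1^2 + b1^2 + c1^2 + d1^2 = 1 := norm_sq_eq ψ hψ
  have hN2 : a2^2 + b2^2 + c2^2 + d2^2 = 1 := norm_sq_eq φ hφ
  have hnn : n 0^2 + n 1^2 + n 2^2 = 1 := by
    have : n 0 * n 0 + n 1 * n 1 + n 2 * n 2 = 1 := by
      simpa [dotProduct, Fin.sum_univ_three] using hn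
    linear_combination this
  have h1 : (2*(a1*c1 + b1*d1))^2 + (2*(a1*d1 - b1*c1))^2 + (a1^2+b1^2-c1^2-d1^2)^2 = 1 := by
    linear_combination (a1^2+b1^2+c1^2+d1^2 + 1) * hN1
  have h2 : (2*(a2*c2 + b2*d2))^2 + (2*(a2*d2 - b2*c2))^2 + (a2^2+b2^2-c2^2-d2^2)^2 = 1 := by
    linear_combination (a2^2+b2^2+c2^2+d2^2 + 1) * hN2
  have hq : (a1*a2 + b1*b2 + c1*c2 + d1*d2)^2 + (a1*b2 - b1*a2 + c1*d2 - d1*c2)^2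
      = (1 + ((2*(a1*c1 + b1*d1))*(2*(a2*c2 + b2*d2))
          + (2*(a1*d1 - b1*c1))*(2*(a2*d2 - b2*c2))
          + (a1^2+b1^2-c1^2-d1^2)*(a2^2+b2^2-c2^2-d2^2)))/2 := by
    linear_combination ((a1^2+b1^2+c1^2+d1^2)/2) * hN2 + (1/2) * hN1
  rw [hq]
  exact key_real (n 0) (n 1) (n 2) _ _ _ _ _ _ hnn h1 h2

theorem stmt_6 (ρ : Matrix (Fin 2) (Fin 2) ℂ) (hρ : IsDensity ρ)
    (n : Fin 3 → ℝ) (hn : n ⬝ᵥ n = 1)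
    (m : ℕ) (p : Fin m → ℝ) (ψ : Fin m → (Fin 2 → ℂ))
    (hp : ∀ k, 0 ≤ p k) (hp1 : (∑ k, p k) = 1)
    (hψ : ∀ k, star (ψ k) ⬝ᵥ ψ k = 1)
    (hdec : ρ = ∑ k, p k • ketbra (ψ k)) :
    mixVar (Lspin n) ρ - (1 - purity ρ) / 2 ≤ ∑ k, p k * pureVar (Lspin n) (ψ k) := by
  set L := Lspin n with hL
  set t : Fin m → ℝ := fun k => (star (ψ k) ⬝ᵥ L.mulVec (ψ k)).re with ht
  set q : Fin m → Fin m → ℝ := fun j k => ((ketbra (ψ j) * ketbra (ψ k)).trace).re with hq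
  -- pure variance = 1/4 - t k ^ 2
  have hpv : ∀ k, pureVar L (ψ k) = 1/4 - (t k)^2 := by
    intro k
    have h1 : star (ψ k) ⬝ᵥ (L * L).mulVec (ψ k) = (1/4 : ℂ) := by
      rw [hL, Lsq n hn]
      rw [smul_mulVec, one_mulVec, dotProduct_smul, hψ k]
      simp
    unfold pureVar
    rw [h1]
    have h2 : ((1/4 : ℂ)).re = (1/4 : ℝ) := by norm_num
    rw [h2]
  -- Tr(L² ρ) = 1/4
  have hA2 : ((L * L * ρ).trace).re = 1/4 := by
    rw [hL, Lsq n hn, smul_mul_assoc, one_mul, Matrix.trace_smul, hρ.2]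
    norm_num
  -- Tr(L ρ) = ∑ p k * t k
  have hAρ : ((L * ρ).trace).re = ∑ k, p k * t k := by
    rw [hdec, Matrix.mul_sum, Matrix.trace_sum]
    rw [Complex.re_sum]
    refine Finset.sum_congr rfl fun k _ => ?_
    rw [Matrix.mul_smul, Matrix.trace_smul, trace_mul_ketbra]
    rw [Complex.real_smul, Complex.mul_re, Complex.ofReal_re, Complex.ofReal_im]
    simp only [zero_mul, sub_zero]
    rfl
  -- purity = ∑∑ p j p k q j k
  have hpur : purity ρ = ∑ j, ∑ k, p j * p k * q j k := by
    unfold purity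
    rw [hdec, Finset.sum_mul_sum]
    rw [Matrix.trace_sum, Complex.re_sum]
    refine Finset.sum_congr rfl fun j _ => ?_
    rw [Matrix.trace_sum, Complex.re_sum]
    refine Finset.sum_congr rfl fun k _ => ?_
    rw [smul_mul_smul_comm, Matrix.trace_smul]
    rw [Complex.real_smul, Complex.mul_re, Complex.ofReal_re, Complex.ofReal_im]
    simp only [zero_mul, sub_zero]
    rfl
  -- pairwise bound
  have hpair : ∀ j k, (t j - t k)^2 ≤ 1 - q j k := fun j k =>
    pairwise n hn (ψ j) (ψ k) (hψ j) (hψ k)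
  -- summation identities
  set S2 := ∑ k, p k * (t k)^2 with hS2
  set T := ∑ k, p k * t k with hT
  have e1 : ∑ j, ∑ k, p j * p k * ((t j - t k)^2) = 2*S2 - 2*T^2 := by
    have inner : ∀ j, ∑ k, p j * p k * ((t j - t k)^2)
        = p j * (t j)^2 + S2 * p j - (2*T) * (p j * t j) := by
      intro j
      have expand : ∀ k, p j * p k * ((t j - t k)^2)
          = (p j * (t j)^2) * p k + p j * (p k * (t k)^2) - (2 * (p j * t j)) * (p k * t k) := by
        intro k; ring
      simp only [expand]
      rw [Finset.sum_sub_distrib, Finset.sum_add_distrib, ← Finset.mul_sum, ← Finset.mul_sum,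
        ← Finset.mul_sum, hp1, ← hS2, ← hT]
      ring
    simp only [inner]
    rw [Finset.sum_sub_distrib, Finset.sum_add_distrib, ← Finset.mul_sum, ← Finset.mul_sum,
      hp1, ← hS2, ← hT]
    ring
  have e2 : ∑ j, ∑ k, p j * p k * (1 - q j k)
      = 1 - ∑ j, ∑ k, p j * p k * q j k := by
    have expand : ∀ (j k : Fin m), p j * p k * (1 - q j k) = p j * p k - p j * p k * q j k := by
      intro j k; ring
    simp only [expand, Finset.sum_sub_distrib]
    rw [← Finset.sum_mul_sum, hp1, one_mul]
  have e3 : ∑ j, ∑ k, p j * p k * ((t j - t k)^2)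
      ≤ ∑ j, ∑ k, p j * p k * (1 - q j k) := by
    refine Finset.sum_le_sum fun j _ => Finset.sum_le_sum fun k _ => ?_
    exact mul_le_mul_of_nonneg_left (hpair j k) (mul_nonneg (hp j) (hp k))
  have hsum : ∑ k, p k * pureVar L (ψ k) = 1/4 - S2 := by
    simp only [hpv]
    have expand : ∀ k, p k * (1/4 - (t k)^2) = p k * (1/4) - p k * (t k)^2 := by
      intro k; ring
    simp only [expand]
    rw [Finset.sum_sub_distrib, ← Finset.sum_mul, hp1, ← hS2]
    ring
  unfold mixVar
  rw [hA2, hAρ, hpur, hsum]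
  linarith [e1, e2, e3]
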